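/- A periodic infinite sequence over positive integers is distinct from its run-length encoding (exponent trajectory); consequently, the Oldenburger-Kolakoski sequence is not eventually periodic. -/

import Mathlib

def dirStep (X : List ℕ) (k t : ℕ) : List ℕ :=
  let X' := X ++ [t]
  X' ++ List.replicate (X'.getD k 1 - 1) t

/-- The word directed by the finite directing word `T`: at step `i` (0-indexed),
append `t_i` followed by `X[i] - 1` further copies of `t_i`. -/
def dirWord (T : List ℕ) : List ℕ :=
  (T.foldl (fun p t => (dirStep p.1 p.2 t, p.2 + 1)) (([] : List ℕ), 0)).1

/-- The `n`-th letter (1-indexed) of the infinite sequence directed by `T`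
(whose meaningful indices are `1, 2, …`). -/
def dirSeq (T : ℕ → ℕ) (n : ℕ) : ℕ :=
  (dirWord (List.ofFn fun i : Fin n => T (i + 1))).getD (n - 1) 0
/-- `IsRunSeq w d` : `d` is the run-length encoding `Δ(w)` of the infinite
sequence `w` (both read at indices `1, 2, …`): there are run boundaries
`b 0 = 1 < b 1 < b 2 < …` such that `w` is constant on each `[b k, b (k+1))`,
consecutive runs carry distinct letters, and `d (k+1)` is the length of the
`(k+1)`-st run. -/
def IsRunSeq (w d : ℕ → ℕ) : Prop :=
  ∃ b : ℕ → ℕ, b 0 = 1 ∧ StrictMono b ∧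
    (∀ k i, b k ≤ i → i < b (k + 1) → w i = w (b k)) ∧
    (∀ k, w (b (k + 1)) ≠ w (b k)) ∧
    (∀ k, d (k + 1) = b (k + 1) - b k)
/-- The Oldenburger-Kolakoski sequence, built by the directed construction
from the alternating directing sequence 1,2,1,2,… -/
def kolakoski : ℕ → ℕ := dirSeq (fun n => if n % 2 = 1 then 1 else 2)

/-- a periodic sequence over ℕ* is distinct from its run-length
encoding; consequently the Oldenburger-Kolakoski sequence is not eventually
periodic. -/
def tAlt (n : ℕ) : ℕ := if n % 2 = 0 then 1 else 2

def KW : ℕ → List ℕ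
  | 0 => []
  | n + 1 => dirStep (KW n) n (tAlt n)

lemma fold_eq (n : ℕ) :
    ((List.ofFn fun i : Fin n => (fun m => if m % 2 = 1 then 1 else 2) ((i : ℕ) + 1)).foldl
      (fun p t => (dirStep p.1 p.2 t, p.2 + 1)) (([] : List ℕ), 0)) = (KW n, n) := by
  induction n with
  | zero => simp [KW]
  | succ n ihn =>
    rw [List.ofFn_succ']
    simp only [List.concat_eq_append, List.foldl_append, List.foldl_cons, List.foldl_nil]
    rw [show (List.ofFn fun i : Fin n =>
        (fun m => if m % 2 = 1 then 1 else 2) ((i.castSucc : ℕ) + 1)) =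
        (List.ofFn fun i : Fin n => (fun m => if m % 2 = 1 then 1 else 2) ((i : ℕ) + 1)) from rfl]
    rw [ihn]
    have ht : (if (n + 1) % 2 = 1 then 1 else 2) = tAlt n := by
      unfold tAlt; rcases Nat.even_or_odd n with h | h <;> simp [Nat.even_iff, Nat.odd_iff] at h <;> simp [h] <;> omega
    simp [KW, Fin.last, ht]

lemma kolakoski_eq_KW (n : ℕ) : kolakoski n = (KW n).getD (n - 1) 0 := by
  unfold kolakoski dirSeq dirWord
  rw [fold_eq]

lemma getD_prefix {L M : List ℕ} (h : L <+: M) {i : ℕ} (hi : i < L.length) (d : ℕ) :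
    M.getD i d = L.getD i d := by
  obtain ⟨t, rfl⟩ := h
  unfold List.getD
  rw [List.getElem?_append_left hi]

lemma KW_succ (n : ℕ) : KW (n + 1) =
    (KW n ++ [tAlt n]) ++ List.replicate ((KW n ++ [tAlt n]).getD n 1 - 1) (tAlt n) := rfl

lemma KW_prefix_succ (n : ℕ) : KW n <+: KW (n + 1) := by
  rw [KW_succ]
  exact ⟨[tAlt n] ++ List.replicate ((KW n ++ [tAlt n]).getD n 1 - 1) (tAlt n), by simp⟩

lemma KW_prefix {m n : ℕ} (h : m ≤ n) : KW m <+: KW n := by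
  induction n with
  | zero => rw [Nat.le_zero.mp h]
  | succ n ihn =>
    rcases Nat.lt_or_ge m (n + 1) with h' | h'
    · exact (ihn (by omega)).trans (KW_prefix_succ n)
    · rw [show m = n + 1 by omega]

lemma KW_len_le (n : ℕ) : n ≤ (KW n).length := by
  induction n with
  | zero => simp
  | succ n ihn =>
    rw [KW_succ]
    simp only [List.length_append, List.length_replicate, List.length_cons, List.length_nil]
    omega

lemma KW_mem {n : ℕ} {x : ℕ} (h : x ∈ KW n) : x = 1 ∨ x = 2 := by
  induction n with
  | zero => simp [KW] at h
  | succ n ihn =>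
    rw [KW_succ] at h
    simp only [List.mem_append, List.mem_replicate, List.mem_singleton] at h
    have ht : tAlt n = 1 ∨ tAlt n = 2 := by unfold tAlt; split <;> simp
    rcases h with (h | h) | h
    · exact ihn h
    · rw [h]; exact ht
    · rw [h.2]; exact ht

def kol0 (i : ℕ) : ℕ := (KW (i + 1)).getD i 0

lemma kol0_lt (i : ℕ) : i < (KW (i + 1)).length := lt_of_lt_of_le (by omega) (KW_len_le (i + 1))

lemma KW_stable {m i : ℕ} (h : i < (KW m).length) : (KW m).getD i 0 = kol0 i := by
  rcases Nat.le_total m (i + 1) with hle | hle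
  · exact (getD_prefix (KW_prefix hle) h 0).symm
  · exact getD_prefix (KW_prefix hle) (kol0_lt i) 0

lemma kolakoski_eq_kol0 {n : ℕ} (h : 1 ≤ n) : kolakoski n = kol0 (n - 1) := by
  rw [kolakoski_eq_KW]
  exact KW_stable (lt_of_lt_of_le (by omega) (KW_len_le n))

lemma kol0_mem (i : ℕ) : kol0 i ∈ KW (i + 1) := by
  unfold kol0
  rw [List.getD_eq_getElem _ _ (kol0_lt i)]
  exact List.getElem_mem _

lemma kol0_pos (i : ℕ) : 1 ≤ kol0 i := by
  rcases KW_mem (kol0_mem i) with h | h <;> omega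

lemma KW_len_succ (n : ℕ) : (KW (n + 1)).length = (KW n).length + kol0 n := by
  have hn : n < (KW n ++ [tAlt n]).length := by simp; have := KW_len_le n; omega
  have e1 : (KW n ++ [tAlt n]).getD n 1 = kol0 n := by
    have ha : (KW n ++ [tAlt n]).getD n 1 = (KW n ++ [tAlt n]).getD n 0 := by
      rw [List.getD_eq_getElem _ 1 hn, List.getD_eq_getElem _ 0 hn]
    have hp : (KW n ++ [tAlt n]) <+: KW (n + 1) := ⟨_, (KW_succ n).symm⟩
    rw [ha, ← getD_prefix hp hn 0]
    exact KW_stable (lt_of_lt_of_le hn hp.length_le)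
  rw [KW_succ, e1]
  simp only [List.length_append, List.length_replicate, List.length_cons, List.length_nil]
  have := kol0_pos n
  omega

lemma kol0_run {k i : ℕ} (h1 : (KW k).length ≤ i) (h2 : i < (KW (k + 1)).length) :
    kol0 i = tAlt k := by
  have hKW : KW (k + 1) = KW k ++
      ([tAlt k] ++ List.replicate ((KW k ++ [tAlt k]).getD k 1 - 1) (tAlt k)) := by
    rw [KW_succ]; simp
  rw [← KW_stable h2, hKW]
  have hiR : i - (KW k).length <
      ([tAlt k] ++ List.replicate ((KW k ++ [tAlt k]).getD k 1 - 1) (tAlt k)).length := by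
    rw [hKW] at h2
    simp only [List.length_append] at h2 ⊢
    omega
  have e : (KW k ++ ([tAlt k] ++ List.replicate ((KW k ++ [tAlt k]).getD k 1 - 1) (tAlt k))).getD i 0
      = ([tAlt k] ++ List.replicate ((KW k ++ [tAlt k]).getD k 1 - 1) (tAlt k)).getD (i - (KW k).length) 0 := by
    unfold List.getD
    rw [List.getElem?_append_right h1]
  rw [e, List.getD_eq_getElem _ 0 hiR]
  have hmem := List.getElem_mem hiR
  simp only [List.mem_append, List.mem_singleton, List.mem_replicate] at hmem
  rcases hmem with h | h
  · exact h
  · exact h.2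

lemma kolakoski_run : IsRunSeq kolakoski kolakoski := by
  refine ⟨fun k => (KW k).length + 1, by simp [KW], ?_, ?_, ?_, ?_⟩
  · apply strictMono_nat_of_lt_succ
    intro k
    rw [KW_len_succ]
    have := kol0_pos k
    omega
  · intro k i hi1 hi2
    dsimp only at hi1 hi2
    have hlen := KW_len_succ k
    have hpos := kol0_pos k
    have e1 : kolakoski i = kol0 (i - 1) := kolakoski_eq_kol0 (by omega)
    have e2 : kolakoski ((KW k).length + 1) = kol0 (KW k).length := by
      rw [kolakoski_eq_kol0 (by omega)]; simp
    rw [e1, e2, kol0_run (k := k) (by omega) (by omega), kol0_run (k := k) (by omega) (by omega)]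
  · intro k
    dsimp only
    have hl1 := KW_len_succ k
    have hl2 := KW_len_succ (k + 1)
    have hp1 := kol0_pos k
    have hp2 := kol0_pos (k + 1)
    have e1 : kolakoski ((KW (k + 1)).length + 1) = kol0 (KW (k + 1)).length := by
      rw [kolakoski_eq_kol0 (by omega)]; simp
    have e2 : kolakoski ((KW k).length + 1) = kol0 (KW k).length := by
      rw [kolakoski_eq_kol0 (by omega)]; simp
    rw [e1, e2, kol0_run (le_refl _) (by omega), kol0_run (le_refl _) (by omega)]
    unfold tAlt
    rcases Nat.even_or_odd k with h | h <;>
      simp [Nat.even_iff, Nat.odd_iff] at h <;> simp [h, Nat.add_mod]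
  · intro k
    dsimp only
    have e1 : kolakoski (k + 1) = kol0 k := by
      rw [kolakoski_eq_kol0 (by omega)]; simp
    rw [e1, KW_len_succ k]
    omega

lemma lemA : ∀ P : ℕ, 1 ≤ P → ∀ (w : ℕ → ℕ) (N : ℕ), IsRunSeq w w →
    (∀ n, N ≤ n → w (n + P) = w n) → False := by
  intro P
  induction P using Nat.strong_induction_on with
  | _ P ih =>
  intro hP w N hrun hper
  obtain ⟨b, hb0, hmono, hconst, hne, hd⟩ := hrun
  have hstep : ∀ k : ℕ, b k < b (k + 1) := fun k => hmono (by omega)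
  have hbk : ∀ k, k + 1 ≤ b k := by
    intro k
    induction k with
    | zero => omega
    | succ k ihk => have := hstep k; omega
  have hadd : ∀ k m, b k + m ≤ b (k + m) := by
    intro k m
    induction m with
    | zero => simp
    | succ m ihm => have := hstep (k + m); have e : k + m + 1 = k + (m + 1) := by omega
                    rw [e] at this; omega
  have cover : ∀ n, 1 ≤ n → ∃ k, b k ≤ n ∧ n < b (k + 1) := by
    intro n hn
    induction n with
    | zero => omega
    | succ n ihn =>
      rcases Nat.eq_or_lt_of_le hn with h1 | h1
      · exact ⟨0, by omega, by have := hstep 0; omega⟩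
      · obtain ⟨k, hk1, hk2⟩ := ihn (by omega)
        rcases Nat.lt_or_ge (n + 1) (b (k + 1)) with h | h
        · exact ⟨k, by omega, h⟩
        · exact ⟨k + 1, by omega, by have := hstep (k + 1); omega⟩
  have nogap : ∀ k n, b k < n → n < b (k + 1) → ¬∃ j, b j = n := by
    rintro k n h1 h2 ⟨j, rfl⟩
    have t1 : k < j := hmono.lt_iff_lt.mp h1
    have t2 : j < k + 1 := hmono.lt_iff_lt.mp h2
    omega
  have bchar : ∀ n, 2 ≤ n → ((∃ j, b j = n) ↔ w n ≠ w (n - 1)) := by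
    intro n hn
    constructor
    · rintro ⟨j, hj⟩
      rcases j with _ | j'
      · omega
      · have h1 : b j' ≤ n - 1 := by have := hstep j'; omega
        have h2 : n - 1 < b (j' + 1) := by omega
        have h3 := hconst j' (n - 1) h1 h2
        rw [h3, ← hj]
        exact hne j'
    · intro hw
      obtain ⟨k, hk1, hk2⟩ := cover (n - 1) (by omega)
      have hwm : w (n - 1) = w (b k) := hconst k (n - 1) hk1 hk2
      rcases Nat.lt_or_ge n (b (k + 1)) with h | h
      · exact absurd ((hconst k n (by omega) h).trans hwm.symm) hw
      · exact ⟨k + 1, by omega⟩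
  set M := max 2 (N + 1) with hM
  have shift : ∀ n, M ≤ n → ((∃ j, b j = n) ↔ (∃ j, b j = n + P)) := by
    intro n hn
    rw [bchar n (by omega), bchar (n + P) (by omega)]
    have e1 : w (n + P) = w n := hper n (by omega)
    have e2 : w (n + P - 1) = w (n - 1) := by
      have e : n + P - 1 = (n - 1) + P := by omega
      rw [e]; exact hper (n - 1) (by omega)
    rw [e1, e2]
  set k₀ := M with hk0
  have hbk0 : M ≤ b k₀ := by have := hbk k₀; omega
  obtain ⟨Q', hQ'⟩ : ∃ j, b j = b k₀ + P := (shift (b k₀) hbk0).mp ⟨k₀, rfl⟩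
  have hQgt : k₀ < Q' := hmono.lt_iff_lt.mp (by omega)
  obtain ⟨Q, rfl⟩ : ∃ Q, Q' = k₀ + Q := ⟨Q' - k₀, by omega⟩
  have hQ1 : 1 ≤ Q := by omega
  have key : ∀ k, k₀ ≤ k → b (k + Q) = b k + P := by
    intro k hk
    induction k, hk using Nat.le_induction with
    | base => exact hQ'
    | succ k hk ihk =>
      have hbk1 : M ≤ b (k + 1) := by
        have h1 : b k₀ ≤ b (k + 1) := hmono.le_iff_le.mpr (by omega)
        omega
      obtain ⟨j, hj⟩ := (shift (b (k + 1)) hbk1).mp ⟨k + 1, rfl⟩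
      have hstepk := hstep k
      have hjgt : k + Q < j := hmono.lt_iff_lt.mp (by omega)
      have hle : b (k + Q + 1) ≤ b j := hmono.le_iff_le.mpr (by omega)
      have e : k + 1 + Q = k + Q + 1 := by omega
      rcases Nat.eq_or_lt_of_le hle with heq | hlt
      · have hje : j = k + Q + 1 := hmono.injective heq.symm
        rw [e]; omega
      · exfalso
        have hsq := hstep (k + Q)
        have hmM : M ≤ b (k + Q + 1) - P := by
          have h1 : b k₀ ≤ b k := hmono.le_iff_le.mpr hk
          omega
        have hmem : ∃ j', b j' = (b (k + Q + 1) - P) + P := ⟨k + Q + 1, by omega⟩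
        obtain ⟨j', hj'⟩ := (shift _ hmM).mpr hmem
        refine nogap k (b (k + Q + 1) - P) (by omega) (by omega) ⟨j', hj'⟩
  have perQ : ∀ n, k₀ + 1 ≤ n → w (n + Q) = w n := by
    intro n hn
    obtain ⟨m, rfl⟩ : ∃ m, n = m + 1 := ⟨n - 1, by omega⟩
    have e1 : m + 1 + Q = m + Q + 1 := by omega
    have e2 := hd (m + Q)
    have e3 := hd m
    have k1 := key m (by omega)
    have k2 := key (m + 1) (by omega)
    have e4 : m + 1 + Q = (m + Q) + 1 := by omega
    rw [e1, e2]
    have e5 : b (m + Q + 1) = b (m + 1) + P := by rw [← e1]; exact k2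
    omega
  have QleP : Q ≤ P := by
    have h1 := hadd k₀ Q
    omega
  rcases Nat.eq_or_lt_of_le QleP with hQP | hQP
  · have allones : ∀ k, k₀ ≤ k → k < k₀ + Q → b (k + 1) = b k + 1 := by
      intro k hk1 hk2
      by_contra hcon
      have h2 := hstep k
      have h3 : b (k + 1) + (k₀ + Q - (k + 1)) ≤ b (k₀ + Q) := by
        have h := hadd (k + 1) (k₀ + Q - (k + 1))
        have e : k + 1 + (k₀ + Q - (k + 1)) = k₀ + Q := by omega
        rw [e] at h; exact h
      have h4 : b k₀ + (k - k₀) ≤ b k := by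
        have h := hadd k₀ (k - k₀)
        have e : k₀ + (k - k₀) = k := by omega
        rw [e] at h; exact h
      omega
    have wind : ∀ k, k₀ ≤ k → k < k₀ + Q → w (k + 1) = 1 := by
      intro k hk1 hk2
      rw [hd k, allones k hk1 hk2]; omega
    have wall : ∀ n, k₀ + 1 ≤ n → w n = 1 := by
      intro n
      induction n using Nat.strong_induction_on with
      | _ n ihn =>
        intro hn
        rcases Nat.lt_or_ge n (k₀ + Q + 1) with h | h
        · have hw := wind (n - 1) (by omega) (by omega)
          have e : n - 1 + 1 = n := by omega
          rwa [e] at hw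
        · have e : n = (n - Q) + Q := by omega
          rw [e, perQ (n - Q) (by omega)]
          exact ihn (n - Q) (by omega) (by omega)
    have h1 := hne (k₀ + 1)
    have h2 := hbk (k₀ + 1)
    have h3 := hbk (k₀ + 1 + 1)
    exact h1 (by rw [wall _ (by omega), wall _ (by omega)])
  · exact ih Q hQP hQ1 w (k₀ + 1) ⟨b, hb0, hmono, hconst, hne, hd⟩ perQ

theorem stmt1 :
    (∀ w d : ℕ → ℕ, (∀ n, 1 ≤ n → 1 ≤ w n) →
      (∃ P, 1 ≤ P ∧ ∀ n, 1 ≤ n → w (n + P) = w n) →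
      IsRunSeq w d → ∃ n, 1 ≤ n ∧ d n ≠ w n) ∧
    ¬ ∃ P N : ℕ, 1 ≤ P ∧ ∀ n, N ≤ n → kolakoski (n + P) = kolakoski n := by
  constructor
  · rintro w d hpos ⟨P, hP, hper⟩ hrun
    by_contra hcon
    push_neg at hcon
    obtain ⟨b, hb0, hmono, hconst, hne, hd⟩ := hrun
    have hrw : IsRunSeq w w :=
      ⟨b, hb0, hmono, hconst, hne, fun k => by
        rw [← hcon (k + 1) (by omega)]; exact hd k⟩
    exact lemA P hP w 1 hrw hper
  · rintro ⟨P, N, hP, hper⟩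
    exact lemA P hP kolakoski N kolakoski_run hper
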